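/- Let G be an ℓ-partite graph on parts V₁,...,V_ℓ of size m with each vertex having exactly n neighbors in every other part, and let λ₂ be the second largest adjacency eigenvalue of G. Let C be an [(ℓ−1)n, k, d] linear code over 𝔽_q, and let 𝒞 be the generalized graph code on G with base code C at every vertex. Then the minimum distance D of 𝒞 satisfies D ≥ dm(d − λ₂)/((ℓ−1)n − λ₂). -/

import Mathlib

open Finset Matrix

section Spectral
variable {V : Type} [Fintype V] [DecidableEq V]

private lemma inner_fun (y z : EuclideanSpace ℝ V) :
    inner (𝕜 := ℝ) y z = ∑ v, y v * z v := by
  simp [PiLp.inner_apply, RCLike.inner_apply, mul_comm]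

private lemma dot_symm_move (A : Matrix V V ℝ) (hA : A.IsHermitian)
    (x y : V → ℝ) : x ⬝ᵥ (A *ᵥ y) = (A *ᵥ x) ⬝ᵥ y := by
  rw [Matrix.dotProduct_mulVec, ← Matrix.mulVec_transpose,
    show Aᵀ = A from by rw [← Matrix.conjTranspose_eq_transpose_of_trivial]; exact hA]

private lemma spectral_aux (A : Matrix V V ℝ) (hA : A.IsHermitian) (K lam : ℝ) (j₀ : V)
    (hlam : ∀ j, j ≠ j₀ → hA.eigenvalues j ≤ lam)
    (hKlam : lam < K) (hcV : 0 < Fintype.card V)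
    (hones : A *ᵥ (fun _ => (1:ℝ)) = fun _ => K)
    (x : V → ℝ) :
    x ⬝ᵥ (A *ᵥ x) ≤ K * (∑ v, x v)^2 / Fintype.card V
      + lam * ((∑ v, x v * x v) - (∑ v, x v)^2 / Fintype.card V) := by
  classical
  have hcne0 : (Fintype.card V : ℝ) ≠ 0 := by positivity
  set B := hA.eigenvectorBasis with hB
  have key : ∀ (z : V → ℝ) (j : V),
      inner (𝕜 := ℝ) (B j) (WithLp.toLp 2 (A *ᵥ z : V → ℝ))
        = hA.eigenvalues j * inner (𝕜 := ℝ) (B j) (WithLp.toLp 2 (z : V → ℝ)) := by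
    intro z j
    rw [inner_fun, inner_fun]
    calc ∑ v, B j v * (A *ᵥ z) v
        = (⇑(B j)) ⬝ᵥ (A *ᵥ z) := rfl
      _ = (A *ᵥ ⇑(B j)) ⬝ᵥ z := dot_symm_move A hA _ _
      _ = (hA.eigenvalues j • ⇑(B j)) ⬝ᵥ z := by rw [hB, hA.mulVec_eigenvectorBasis]
      _ = hA.eigenvalues j * ∑ v, B j v * z v := by
          rw [smul_dotProduct]; rfl
  have parseval : ∀ z z' : EuclideanSpace ℝ V,
      inner (𝕜 := ℝ) z z' = ∑ j, inner (𝕜 := ℝ) (B j) z * inner (𝕜 := ℝ) (B j) z' := by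
    intro z z'
    rw [← B.sum_inner_mul_inner z z']
    exact Finset.sum_congr rfl fun j _ => by rw [real_inner_comm z (B j)]
  -- the all-ones vector
  have hKw : ∀ j : V, inner (𝕜 := ℝ) (B j) (WithLp.toLp 2 (fun _ => K : V → ℝ))
      = K * inner (𝕜 := ℝ) (B j) (WithLp.toLp 2 (fun _ => (1:ℝ))) := by
    intro j
    rw [inner_fun, inner_fun, Finset.mul_sum]
    exact Finset.sum_congr rfl fun v _ => by ring
  have heig : ∀ j : V, hA.eigenvalues j * inner (𝕜 := ℝ) (B j) (WithLp.toLp 2 (fun _ => (1:ℝ)))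
      = K * inner (𝕜 := ℝ) (B j) (WithLp.toLp 2 (fun _ => (1:ℝ))) := by
    intro j
    rw [← key (fun _ => 1) j, show (A *ᵥ (fun _ => (1:ℝ)) : V → ℝ) = (fun _ => K) from hones,
      hKw j]
  have ha0 : ∀ j, j ≠ j₀ → inner (𝕜 := ℝ) (B j) (WithLp.toLp 2 (fun _ => (1:ℝ))) = 0 := by
    intro j hj
    by_contra h
    have := mul_right_cancel₀ h (heig j)
    exact absurd (this ▸ hlam j hj) (not_le.mpr hKlam)
  have hw_norm : ∑ j, inner (𝕜 := ℝ) (B j) (WithLp.toLp 2 (fun _ => (1:ℝ)))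
      * inner (𝕜 := ℝ) (B j) (WithLp.toLp 2 (fun _ => (1:ℝ))) = (Fintype.card V : ℝ) := by
    rw [← parseval, inner_fun]
    simp
  have haj₀sq : inner (𝕜 := ℝ) (B j₀) (WithLp.toLp 2 (fun _ => (1:ℝ)))
      * inner (𝕜 := ℝ) (B j₀) (WithLp.toLp 2 (fun _ => (1:ℝ))) = (Fintype.card V : ℝ) := by
    rw [Fintype.sum_eq_single j₀ (fun j hj => by rw [ha0 j hj]; ring)] at hw_norm
    exact hw_norm
  have ha₀ne : inner (𝕜 := ℝ) (B j₀) (WithLp.toLp 2 (fun _ => (1:ℝ))) ≠ 0 := by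
    intro h
    rw [h, mul_zero] at haj₀sq
    exact hcne0 haj₀sq.symm
  have hKeig : hA.eigenvalues j₀ = K := mul_right_cancel₀ ha₀ne (heig j₀)
  have hwy : inner (𝕜 := ℝ) (B j₀) (WithLp.toLp 2 (fun _ => (1:ℝ)))
      * inner (𝕜 := ℝ) (B j₀) (WithLp.toLp 2 (x : V → ℝ)) = ∑ v, x v := by
    have h := parseval (WithLp.toLp 2 (fun _ => (1:ℝ))) (WithLp.toLp 2 (x : V → ℝ))
    rw [Fintype.sum_eq_single j₀ (fun j hj => by rw [ha0 j hj]; ring)] at h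
    rw [← h, inner_fun]
    simp
  have hcfsq : inner (𝕜 := ℝ) (B j₀) (WithLp.toLp 2 (x : V → ℝ))
      * inner (𝕜 := ℝ) (B j₀) (WithLp.toLp 2 (x : V → ℝ))
      = (∑ v, x v)^2 / Fintype.card V := by
    rw [eq_div_iff hcne0, ← haj₀sq, ← hwy]
    ring
  have hxx : ∑ j, inner (𝕜 := ℝ) (B j) (WithLp.toLp 2 (x : V → ℝ))
      * inner (𝕜 := ℝ) (B j) (WithLp.toLp 2 (x : V → ℝ)) = ∑ v, x v * x v := by
    rw [← parseval, inner_fun]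
  have hmain : x ⬝ᵥ (A *ᵥ x) = ∑ j, hA.eigenvalues j
      * (inner (𝕜 := ℝ) (B j) (WithLp.toLp 2 (x : V → ℝ))
        * inner (𝕜 := ℝ) (B j) (WithLp.toLp 2 (x : V → ℝ))) := by
    have h := parseval (WithLp.toLp 2 (x : V → ℝ)) (WithLp.toLp 2 (A *ᵥ x : V → ℝ))
    simp only [key] at h
    rw [inner_fun] at h
    rw [show x ⬝ᵥ (A *ᵥ x) = ∑ v, x v * (A *ᵥ x) v from rfl, h]
    exact Finset.sum_congr rfl fun j _ => by ring
  rw [hmain]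
  have hsplit := Finset.sum_erase_add Finset.univ (fun j => hA.eigenvalues j
      * (inner (𝕜 := ℝ) (B j) (WithLp.toLp 2 (x : V → ℝ))
        * inner (𝕜 := ℝ) (B j) (WithLp.toLp 2 (x : V → ℝ)))) (Finset.mem_univ j₀)
  have hsplit2 := Finset.sum_erase_add Finset.univ (fun j =>
      inner (𝕜 := ℝ) (B j) (WithLp.toLp 2 (x : V → ℝ))
        * inner (𝕜 := ℝ) (B j) (WithLp.toLp 2 (x : V → ℝ))) (Finset.mem_univ j₀)
  rw [hxx] at hsplit2
  have hrest : ∑ j ∈ Finset.univ.erase j₀, hA.eigenvalues j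
      * (inner (𝕜 := ℝ) (B j) (WithLp.toLp 2 (x : V → ℝ))
        * inner (𝕜 := ℝ) (B j) (WithLp.toLp 2 (x : V → ℝ)))
      ≤ ∑ j ∈ Finset.univ.erase j₀, lam
      * (inner (𝕜 := ℝ) (B j) (WithLp.toLp 2 (x : V → ℝ))
        * inner (𝕜 := ℝ) (B j) (WithLp.toLp 2 (x : V → ℝ))) := by
    refine Finset.sum_le_sum fun j hj => ?_
    exact mul_le_mul_of_nonneg_right (hlam j (Finset.ne_of_mem_erase hj)) (mul_self_nonneg _)
  rw [← Finset.mul_sum] at hrest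
  -- combine
  have e1 : ∑ j ∈ Finset.univ.erase j₀,
      inner (𝕜 := ℝ) (B j) (WithLp.toLp 2 (x : V → ℝ))
        * inner (𝕜 := ℝ) (B j) (WithLp.toLp 2 (x : V → ℝ))
      = (∑ v, x v * x v) - (∑ v, x v)^2 / Fintype.card V := by
    have := hsplit2
    simp only at this
    rw [hcfsq] at this
    linarith
  rw [e1] at hrest
  have e2 : ∑ j, hA.eigenvalues j
      * (inner (𝕜 := ℝ) (B j) (WithLp.toLp 2 (x : V → ℝ))
        * inner (𝕜 := ℝ) (B j) (WithLp.toLp 2 (x : V → ℝ)))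
      = K * ((∑ v, x v)^2 / Fintype.card V)
        + ∑ j ∈ Finset.univ.erase j₀, hA.eigenvalues j
      * (inner (𝕜 := ℝ) (B j) (WithLp.toLp 2 (x : V → ℝ))
        * inner (𝕜 := ℝ) (B j) (WithLp.toLp 2 (x : V → ℝ))) := by
    have := hsplit
    simp only at this
    rw [hKeig, hcfsq] at this
    linarith
  rw [e2]
  have : K * ((∑ v, x v)^2 / Fintype.card V) = K * (∑ v, x v)^2 / Fintype.card V := by ring
  linarith

end Spectral


section SubG
variable {V : Type} [DecidableEq V] (G : SimpleGraph V) [DecidableRel G.Adj]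
  {F : Type} [DecidableEq F] [Zero F] (c : Sym2 V → F)

/-- The subgraph of `G` consisting of edges with nonzero symbol. -/
private def subG : SimpleGraph V where
  Adj u w := G.Adj u w ∧ c s(u, w) ≠ 0
  symm := ⟨fun u w h => ⟨h.1.symm, by rw [Sym2.eq_swap]; exact h.2⟩⟩
  loopless := ⟨fun u h => G.loopless.1 u h.1⟩

private instance : DecidableRel (subG G c).Adj := fun _ _ => instDecidableAnd

private lemma other'_eq {V : Type} [DecidableEq V] {v u : V} {z : Sym2 V} (h : v ∈ z)
    (hz : z = s(v, u)) : Sym2.Mem.other' h = u := by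
  subst hz
  exact Sym2.congr_right.mp (Sym2.other_spec' h)

private lemma subG_adj (u w : V) : (subG G c).Adj u w ↔ G.Adj u w ∧ c s(u, w) ≠ 0 := Iff.rfl

end SubG

/-- Main theorem: for the generalized graph code `𝒞` on an `ℓ`-partite graph `G`
(parts of size `m`, each vertex with exactly `n` neighbors in every other part),
with base code `C` an `[(ℓ-1)n, k, d]` linear code over a finite field `F`, every
nonzero codeword of `𝒞` has weight at least `dm(d - λ₂)/((ℓ-1)n - λ₂)`, where `λ₂`
is the second largest adjacency eigenvalue of `G`; i.e. `D ≥ dm(d-λ₂)/((ℓ-1)n-λ₂)`.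
The edges incident to each vertex `v` are ordered via a bijection `β v`. -/
theorem stmt9 {V : Type} [Fintype V] [DecidableEq V]
    (G : SimpleGraph V) [DecidableRel G.Adj] (ℓ m n : ℕ) (hℓ : 1 ≤ ℓ) [NeZero ℓ]
    (P : Fin ℓ → Finset V)
    (hpart : ∀ v : V, ∃! i, v ∈ P i)
    (hm : ∀ i, (P i).card = m)
    (hnoedge : ∀ i, ∀ u ∈ P i, ∀ v ∈ P i, ¬ G.Adj u v)
    (hdeg : ∀ i j, i ≠ j → ∀ v ∈ P i, ((P j).filter (G.Adj v)).card = n)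
    (hA : (G.adjMatrix ℝ).IsHermitian)
    (hcard : 2 ≤ Fintype.card V)
    (e : Fin (Fintype.card V) ≃ V) (hmono : Antitone (hA.eigenvalues ∘ e))
    (hgap : hA.eigenvalues (e ⟨1, by omega⟩) < ((ℓ : ℝ) - 1) * n)
    (F : Type) [Field F] [Fintype F] [DecidableEq F]
    (C : Submodule F (Fin ((ℓ - 1) * n) → F)) (k d : ℕ)
    (hk : Module.finrank F C = k)
    (hdC : ∀ w ∈ C, w ≠ 0 → d ≤ hammingNorm w)
    (hdC' : ∃ w ∈ C, w ≠ 0 ∧ hammingNorm w = d)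
    (β : ∀ v : V, Fin ((ℓ - 1) * n) ≃ {e : Sym2 V // e ∈ G.edgeFinset ∧ v ∈ e})
    (c : Sym2 V → F)
    (hc0 : ∀ e' : Sym2 V, e' ∉ G.edgeFinset → c e' = 0)
    (hcC : ∀ v : V, (fun i => c (β v i).val) ∈ C)
    (hcne : ∃ e' ∈ G.edgeFinset, c e' ≠ 0) :
    (d : ℝ) * m * ((d : ℝ) - hA.eigenvalues (e ⟨1, by omega⟩)) /
        (((ℓ : ℝ) - 1) * n - hA.eigenvalues (e ⟨1, by omega⟩)) ≤
      (G.edgeFinset.filter (fun e' => c e' ≠ 0)).card := by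
  classical
  -- first: ℓ ≥ 2
  have hℓ2 : 2 ≤ ℓ := by
    by_contra h
    obtain ⟨e', he', hce'⟩ := hcne
    induction e' using Sym2.ind with
    | _ a b =>
      have hadj : G.Adj a b := by
        rwa [SimpleGraph.mem_edgeFinset, SimpleGraph.mem_edgeSet] at he'
      obtain ⟨ia, hia, _⟩ := hpart a
      obtain ⟨ib, hib, _⟩ := hpart b
      have hiab : ia = ib := by
        have h1 := ia.isLt; have h2 := ib.isLt
        apply Fin.ext
        omega
      exact hnoedge ib a (hiab ▸ hia) b hib hadj
  -- partition facts
  have hdisj : ∀ i j : Fin ℓ, i ≠ j → Disjoint (P i) (P j) := by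
    intro i j hij
    rw [Finset.disjoint_left]
    intro v hvi hvj
    obtain ⟨iv, -, huniq⟩ := hpart v
    exact hij ((huniq i hvi).trans (huniq j hvj).symm)
  have huniv : (Finset.univ : Finset V) = Finset.univ.biUnion P := by
    ext v
    simp only [Finset.mem_biUnion, Finset.mem_univ, true_iff]
    obtain ⟨i, hi, -⟩ := hpart v
    exact ⟨i, trivial, hi⟩
  have hcV : Fintype.card V = ℓ * m := by
    rw [← Finset.card_univ, huniv, Finset.card_biUnion (fun i _ j _ hij => hdisj i j hij)]
    simp [hm, Finset.sum_const, mul_comm]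
  -- degrees
  have hdegv : ∀ v : V, G.degree v = (ℓ - 1) * n := by
    intro v
    obtain ⟨iv, hiv, -⟩ := hpart v
    have hnb : G.neighborFinset v
        = (Finset.univ.erase iv).biUnion (fun j => (P j).filter (G.Adj v)) := by
      ext u
      simp only [SimpleGraph.mem_neighborFinset, Finset.mem_biUnion, Finset.mem_erase,
        Finset.mem_filter, Finset.mem_univ, true_and, and_true]
      constructor
      · intro hadj
        obtain ⟨j, hj, -⟩ := hpart u
        refine ⟨j, ?_, hj, hadj⟩
        rintro rfl
        exact hnoedge j v hiv u hj hadj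
      · rintro ⟨j, hj, hu, hadj⟩
        exact hadj
    rw [SimpleGraph.degree, hnb, Finset.card_biUnion (fun i hi j hj hij =>
      Finset.disjoint_filter_filter (hdisj i j hij))]
    rw [Finset.sum_congr rfl (fun j hj => hdeg iv j
      (fun hh => (Finset.mem_erase.mp hj).1 hh.symm) v hiv)]
    rw [Finset.sum_const, Finset.card_erase_of_mem (Finset.mem_univ iv), Finset.card_univ,
      Fintype.card_fin, smul_eq_mul]
  have hones : (G.adjMatrix ℝ) *ᵥ (fun _ => (1:ℝ)) = fun _ => ((ℓ:ℝ)-1)*n := by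
    funext v
    rw [SimpleGraph.adjMatrix_mulVec_apply]
    have : ∑ _u ∈ G.neighborFinset v, (1:ℝ) = (G.degree v : ℝ) := by
      rw [Finset.sum_const, SimpleGraph.degree]
      simp
    rw [this, hdegv v]
    push_cast [Nat.cast_sub hℓ]
    ring
  -- second eigenvalue bound
  set lam := hA.eigenvalues (e ⟨1, by omega⟩) with hlamdef
  have hlam : ∀ j, j ≠ e ⟨0, by omega⟩ → hA.eigenvalues j ≤ lam := by
    intro j hj
    have h1 : (⟨1, by omega⟩ : Fin (Fintype.card V)) ≤ e.symm j := by
      rw [Fin.le_def]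
      have : e.symm j ≠ ⟨0, by omega⟩ := by
        intro h
        apply hj
        rw [← h, Equiv.apply_symm_apply]
      have := Fin.val_ne_of_ne this
      simp only [Fin.val_zero] at this ⊢
      omega
    have := hmono h1
    simpa using this
  set lG := subG G c with hlG
  -- edge sets agree
  have hedge : lG.edgeFinset = G.edgeFinset.filter (fun e' => c e' ≠ 0) := by
    ext e'
    induction e' using Sym2.ind with
    | _ a b =>
      simp only [SimpleGraph.mem_edgeFinset, Finset.mem_filter, SimpleGraph.mem_edgeSet, hlG,
        subG_adj]
  -- vertex support
  set S : Finset V := Finset.univ.filter (fun v => ¬ (fun i => c (β v i).val) = 0) with hSdef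
  have hmemS : ∀ v : V, v ∈ S ↔ (fun i => c (β v i).val) ≠ 0 := by
    intro v
    simp [hSdef]
  have hSmem : ∀ u w : V, G.Adj u w → c s(u, w) ≠ 0 → u ∈ S := by
    intro u w hadj hc
    rw [hmemS, Function.ne_iff]
    refine ⟨(β u).symm ⟨s(u, w), ?_, Sym2.mem_mk_left u w⟩, ?_⟩
    · rw [SimpleGraph.mem_edgeFinset, SimpleGraph.mem_edgeSet]; exact hadj
    · rw [Equiv.apply_symm_apply]
      exact hc
  -- degrees in the subgraph
  have hdegG' : ∀ v : V, lG.degree v = hammingNorm (fun i => c (β v i).val) := by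
    intro v
    rw [SimpleGraph.degree]
    refine Finset.card_bij' (fun u hu => (β v).symm ⟨s(v, u), ?_, Sym2.mem_mk_left v u⟩)
      (fun i hi => Sym2.Mem.other' (β v i).2.2) ?_ ?_ ?_ ?_
    · rw [SimpleGraph.mem_neighborFinset] at hu
      rw [SimpleGraph.mem_edgeFinset, SimpleGraph.mem_edgeSet]
      exact hu.1
    · intro u hu
      rw [SimpleGraph.mem_neighborFinset] at hu
      simp only [Finset.mem_filter, Finset.mem_univ, true_and, Equiv.apply_symm_apply]
      exact hu.2
    · intro i hi
      simp only [Finset.mem_filter, Finset.mem_univ, true_and] at hi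
      rw [SimpleGraph.mem_neighborFinset, hlG, subG_adj]
      constructor
      · have h1 := Sym2.other_spec' (β v i).2.2
        have h2 := (β v i).2.1
        rw [← h1, SimpleGraph.mem_edgeFinset, SimpleGraph.mem_edgeSet] at h2
        exact h2
      · rw [Sym2.other_spec' (β v i).2.2]
        exact hi
    · intro u hu
      exact other'_eq _ (by rw [Equiv.apply_symm_apply])
    · intro i hi
      rw [Equiv.symm_apply_eq]
      apply Subtype.ext
      exact Sym2.other_spec' (β v i).2.2
  -- handshake bound : d * |S| ≤ 2 * N
  have hhand : d * S.card ≤ 2 * (G.edgeFinset.filter (fun e' => c e' ≠ 0)).card := by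
    calc d * S.card = ∑ _v ∈ S, d := by rw [Finset.sum_const, smul_eq_mul, mul_comm]
      _ ≤ ∑ v ∈ S, lG.degree v := by
          refine Finset.sum_le_sum fun v hv => ?_
          rw [hdegG' v]
          exact hdC _ (hcC v) ((hmemS v).mp hv)
      _ ≤ ∑ v, lG.degree v :=
          Finset.sum_le_sum_of_subset (Finset.subset_univ S)
      _ = 2 * lG.edgeFinset.card := lG.sum_degrees_eq_twice_card_edges
      _ = _ := by rw [hedge]
  -- S is nonempty
  have hSpos : 0 < S.card := by
    obtain ⟨e', he', hce'⟩ := hcne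
    induction e' using Sym2.ind with
    | _ a b =>
      have hadj : G.Adj a b := by
        rwa [SimpleGraph.mem_edgeFinset, SimpleGraph.mem_edgeSet] at he'
      exact Finset.card_pos.mpr ⟨a, hSmem a b hadj hce'⟩
  -- the indicator vector
  set x : V → ℝ := fun v => if v ∈ S then 1 else 0 with hxdef
  have hsum1 : ∑ v, x v = S.card := by
    simp [hxdef]
  have hsum2 : ∑ v, x v * x v = S.card := by
    have h : ∀ v, x v * x v = x v := by
      intro v
      by_cases h : v ∈ S <;> simp [hxdef, h]
    rw [Finset.sum_congr rfl fun v _ => h v, hsum1]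
  -- lower bound on the quadratic form
  have hindic : ∀ g : V → ℝ, ∑ v, x v * g v = ∑ v ∈ S, g v := by
    intro g
    rw [← Finset.univ_inter S, ← Finset.sum_ite_mem]
    refine Finset.sum_congr rfl fun v _ => ?_
    by_cases h : v ∈ S <;> simp [hxdef, h]
  have hdot : x ⬝ᵥ ((G.adjMatrix ℝ) *ᵥ x)
      = ∑ v ∈ S, ((S.filter (G.Adj v)).card : ℝ) := by
    calc x ⬝ᵥ ((G.adjMatrix ℝ) *ᵥ x)
        = ∑ v, x v * ((G.adjMatrix ℝ) *ᵥ x) v := rfl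
      _ = ∑ v ∈ S, ((G.adjMatrix ℝ) *ᵥ x) v := hindic _
      _ = ∑ v ∈ S, ∑ u, (G.adjMatrix ℝ) v u * x u := rfl
      _ = ∑ v ∈ S, ∑ u, x u * (G.adjMatrix ℝ) v u := by
          refine Finset.sum_congr rfl fun v _ => Finset.sum_congr rfl fun u _ => by ring
      _ = ∑ v ∈ S, ∑ u ∈ S, (G.adjMatrix ℝ) v u := by
          exact Finset.sum_congr rfl fun v _ => hindic _
      _ = ∑ v ∈ S, ((S.filter (G.Adj v)).card : ℝ) := by
          refine Finset.sum_congr rfl fun v _ => ?_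
          simp [SimpleGraph.adjMatrix_apply, Finset.sum_boole]
  have hquad_low : (d : ℝ) * S.card ≤ x ⬝ᵥ ((G.adjMatrix ℝ) *ᵥ x) := by
    rw [hdot]
    calc (d : ℝ) * S.card = ∑ _v ∈ S, (d : ℝ) := by
          rw [Finset.sum_const, nsmul_eq_mul, mul_comm]
      _ ≤ ∑ v ∈ S, ((S.filter (G.Adj v)).card : ℝ) := by
          refine Finset.sum_le_sum fun v hv => ?_
          have hsub : lG.neighborFinset v ⊆ S.filter (G.Adj v) := by
            intro u hu
            rw [SimpleGraph.mem_neighborFinset, hlG, subG_adj] at hu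
            refine Finset.mem_filter.mpr ⟨hSmem u v hu.1.symm (by rw [Sym2.eq_swap]; exact hu.2), hu.1⟩
          have h1 : d ≤ lG.degree v := by
            rw [hdegG' v]
            exact hdC _ (hcC v) ((hmemS v).mp hv)
          have h2 : lG.degree v ≤ (S.filter (G.Adj v)).card := by
            rw [SimpleGraph.degree]
            exact Finset.card_le_card hsub
          exact_mod_cast h1.trans h2
  -- apply the spectral bound
  have hcV0 : 0 < Fintype.card V := by omega
  have hspec := spectral_aux (G.adjMatrix ℝ) hA (((ℓ:ℝ)-1)*n) lam (e ⟨0, by omega⟩)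
    hlam hgap hcV0 hones x
  rw [hsum1, hsum2] at hspec
  -- final arithmetic
  set sR : ℝ := (S.card : ℝ) with hsR
  set NR : ℝ := ((G.edgeFinset.filter (fun e' => c e' ≠ 0)).card : ℝ) with hNR
  set K : ℝ := ((ℓ:ℝ)-1)*n with hK
  have hcVR : (Fintype.card V : ℝ) = (ℓ:ℝ) * m := by
    rw [hcV]
    push_cast
    ring
  have hsRpos : 0 < sR := by
    rw [hsR]
    exact_mod_cast hSpos
  have h2N : (d : ℝ) * sR ≤ 2 * NR := by
    rw [hsR, hNR]
    exact_mod_cast hhand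
  have hKlam : lam < K := hgap
  have hmR : (0:ℝ) ≤ m := Nat.cast_nonneg m
  have hdR : (0:ℝ) ≤ d := Nat.cast_nonneg d
  have hNRnn : (0:ℝ) ≤ NR := Nat.cast_nonneg _
  have hlR : (2:ℝ) ≤ ℓ := by exact_mod_cast hℓ2
  rw [div_le_iff₀ (by linarith : (0:ℝ) < K - lam)]
  by_cases hdlam : (d:ℝ) ≤ lam
  · have h1 : (d:ℝ) * m * ((d:ℝ) - lam) ≤ 0 := by
      apply mul_nonpos_of_nonneg_of_nonpos
      · positivity
      · linarith
    have h2 : (0:ℝ) ≤ NR * (K - lam) := by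
      apply mul_nonneg hNRnn
      linarith
    linarith
  · push_neg at hdlam
    have hcVpos : (0:ℝ) < (Fintype.card V : ℝ) := by exact_mod_cast hcV0
    have hquad := hquad_low.trans hspec
    -- (d - lam) * cardV ≤ (K - lam) * sR
    have hq2 : ((d:ℝ) - lam) * sR * (Fintype.card V : ℝ) ≤ (K - lam) * sR * sR := by
      have h3 := mul_le_mul_of_nonneg_right hquad hcVpos.le
      have hcne : (Fintype.card V : ℝ) ≠ 0 := ne_of_gt hcVpos
      have h4 : (K * sR ^ 2 / (Fintype.card V : ℝ)
          + lam * (sR - sR ^ 2 / (Fintype.card V : ℝ))) * (Fintype.card V : ℝ)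
          = K * sR ^ 2 + lam * (sR * (Fintype.card V : ℝ) - sR ^ 2) := by
        field_simp
      rw [h4] at h3
      linarith [h3]
    have hstep1 : ((d:ℝ) - lam) * (Fintype.card V : ℝ) ≤ (K - lam) * sR := by
      have := (mul_le_mul_iff_of_pos_right hsRpos).mp (by linarith [hq2] :
        (((d:ℝ) - lam) * (Fintype.card V : ℝ)) * sR ≤ ((K - lam) * sR) * sR)
      exact this
    rw [hcVR] at hstep1
    -- conclude
    have hh1 := mul_le_mul_of_nonneg_left hstep1 (by positivity : (0:ℝ) ≤ (d:ℝ)/2)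
    have hh2 := mul_le_mul_of_nonneg_right h2N (by linarith : (0:ℝ) ≤ K - lam)
    have hh3 : (0:ℝ) ≤ (d:ℝ) * m * ((d:ℝ) - lam) * ((ℓ:ℝ) - 2) :=
      mul_nonneg (mul_nonneg (mul_nonneg hdR hmR) (by linarith)) (by linarith)
    linarith [hh1, hh2, hh3]
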